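/- In R = k[[t^7, t^8, t^9, t^{11}]], the trace ideal of I = (t^8, t^9, t^{21}) is tr_R(I) = (t^7, t^8, t^9). -/

import Mathlib

set_option synthInstance.maxHeartbeats 1000000
set_option maxHeartbeats 1000000

open HahnSeries

/-- The numerical semigroup generated by `7, 8, 9, 11`. -/
def valSG : AddSubmonoid ℕ := AddSubmonoid.closure {7, 8, 9, 11}

/-- The numerical semigroup ring `R = k[[t⁷, t⁸, t⁹, t¹¹]]`, realized as the subring of
the Laurent series field `k((t))` consisting of (power) series supported on the numerical
semigroup `⟨7, 8, 9, 11⟩`. -/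
def NSR (k : Type*) [Field k] : Subring (LaurentSeries k) where
  carrier := {x | ∀ n : ℤ, x.coeff n ≠ 0 → ∃ m ∈ valSG, (m : ℤ) = n}
  mul_mem' := by
    intro a b ha hb n hn
    rw [HahnSeries.coeff_mul] at hn
    obtain ⟨ij, hij, hne⟩ := Finset.exists_ne_zero_of_sum_ne_zero hn
    rw [Finset.mem_addAntidiagonal] at hij
    obtain ⟨m1, hm1, he1⟩ := ha ij.1 (fun h => hne (by rw [h, zero_mul]))
    obtain ⟨m2, hm2, he2⟩ := hb ij.2 (fun h => hne (by rw [h, mul_zero]))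
    exact ⟨m1 + m2, add_mem hm1 hm2, by push_cast; rw [he1, he2]; exact hij.2.2⟩
  one_mem' := by
    intro n hn
    rcases eq_or_ne n 0 with h | h
    · exact ⟨0, zero_mem _, by simp [h]⟩
    · exact absurd (by simpa using HahnSeries.coeff_single_of_ne (r := (1 : k)) h) hn
  add_mem' := by
    intro a b ha hb n hn
    rw [HahnSeries.coeff_add] at hn
    by_cases h : a.coeff n = 0
    · exact hb n (by intro hb0; exact hn (by rw [h, hb0, add_zero]))
    · exact ha n h
  zero_mem' := by intro n hn; simp at hn
  neg_mem' := by
    intro a ha n hn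
    exact ha n (by intro h0; exact hn (by rw [HahnSeries.coeff_neg, h0, neg_zero]))

theorem single_mem_NSR {k : Type*} [Field k] {n : ℕ} (hn : n ∈ valSG) :
    (HahnSeries.single (n : ℤ) (1 : k) : LaurentSeries k) ∈ NSR k := by
  intro m hm
  rcases eq_or_ne m (n : ℤ) with h | h
  · exact ⟨n, hn, h.symm⟩
  · exact absurd (HahnSeries.coeff_single_of_ne h) hm

theorem mem_valSG_7 : (7 : ℕ) ∈ valSG := AddSubmonoid.subset_closure (by simp)
theorem mem_valSG_8 : (8 : ℕ) ∈ valSG := AddSubmonoid.subset_closure (by simp)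
theorem mem_valSG_9 : (9 : ℕ) ∈ valSG := AddSubmonoid.subset_closure (by simp)
theorem mem_valSG_11 : (11 : ℕ) ∈ valSG := AddSubmonoid.subset_closure (by simp)
theorem mem_valSG_21 : (21 : ℕ) ∈ valSG := by
  have := add_mem (add_mem mem_valSG_7 mem_valSG_7) mem_valSG_7
  norm_num at this ⊢; exact this

theorem tpow_mem {k : Type*} [Field k] {n : ℕ} (hn : n ∈ valSG) :
    (HahnSeries.single (1 : ℤ) (1 : k)) ^ n ∈ NSR k := by
  rw [HahnSeries.single_pow]
  simpa using single_mem_NSR hn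

/-- `t`, the uniformizer of `k[[t]] ⊆ k((t))`. -/
noncomputable def tE (k : Type*) [Field k] : LaurentSeries k := HahnSeries.single 1 1

theorem tE_pow_mem {k : Type*} [Field k] {n : ℕ} (hn : n ∈ valSG) : tE k ^ n ∈ NSR k :=
  tpow_mem hn

/-- `t⁷` as an element of `R = k[[t⁷,t⁸,t⁹,t¹¹]]`. -/
noncomputable def t7 (k : Type*) [Field k] : ↥(NSR k) := ⟨tE k ^ 7, tE_pow_mem mem_valSG_7⟩
/-- `t⁸` as an element of `R`. -/
noncomputable def t8 (k : Type*) [Field k] : ↥(NSR k) := ⟨tE k ^ 8, tE_pow_mem mem_valSG_8⟩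
/-- `t⁹` as an element of `R`. -/
noncomputable def t9 (k : Type*) [Field k] : ↥(NSR k) := ⟨tE k ^ 9, tE_pow_mem mem_valSG_9⟩
/-- `t¹¹` as an element of `R`. -/
noncomputable def t11 (k : Type*) [Field k] : ↥(NSR k) := ⟨tE k ^ 11, tE_pow_mem mem_valSG_11⟩
/-- `t²¹` as an element of `R`. -/
noncomputable def t21 (k : Type*) [Field k] : ↥(NSR k) := ⟨tE k ^ 21, tE_pow_mem mem_valSG_21⟩

theorem coeff_eq_zero_of_neg_of_mem {k : Type*} [Field k] {x : LaurentSeries k}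
    (hx : x ∈ NSR k) {n : ℤ} (hn : n < 0) : x.coeff n = 0 := by
  by_contra h
  obtain ⟨m, -, hm⟩ := hx n h
  omega

/-- The power series ring `k[[t]]` (the integral closure of `R`), as an `R`-submodule of
`k((t))`. -/
def PSpart (k : Type*) [Field k] : Submodule ↥(NSR k) (LaurentSeries k) where
  carrier := {x | ∀ n : ℤ, n < 0 → x.coeff n = 0}
  zero_mem' := by intro n _; simp
  add_mem' := by intro a b ha hb n hn; rw [HahnSeries.coeff_add, ha n hn, hb n hn, add_zero]
  smul_mem' := by
    intro c x hx n hn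
    show ((c : LaurentSeries k) * x).coeff n = 0
    rw [HahnSeries.coeff_mul]
    apply Finset.sum_eq_zero
    intro ij hij
    rw [Finset.mem_addAntidiagonal] at hij
    rcases lt_or_ge ij.1 0 with h | h
    · rw [coeff_eq_zero_of_neg_of_mem c.2 h, zero_mul]
    · rcases lt_or_ge ij.2 0 with h2 | h2
      · rw [hx ij.2 h2, mul_zero]
      · exact absurd hij.2.2 (by omega)

/-- The conductor ideal `C = R : k[[t]] = {r ∈ R | r·k[[t]] ⊆ R}` of `R = k[[t⁷,t⁸,t⁹,t¹¹]]`. -/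
noncomputable def condNSR (k : Type*) [Field k] : Ideal ↥(NSR k) :=
  Submodule.colon (R := ↥(NSR k)) (M := LaurentSeries k)
    (1 : Submodule ↥(NSR k) (LaurentSeries k)) (PSpart k)

noncomputable def traceIdeal (R : Type*) [CommRing R] (M : Type*) [AddCommGroup M]
    [Module R M] : Ideal R :=
  ⨆ f : M →ₗ[R] R, LinearMap.range f


section Aux

variable {k : Type*} [Field k]

lemma tE_pow_single (n : ℕ) : (tE k) ^ n = HahnSeries.single (n : ℤ) (1 : k) := by
  rw [tE, single_pow]; simp

lemma coeff_shift (m : ℤ) (x : LaurentSeries k) (n : ℤ) :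
    ((HahnSeries.single m (1 : k) : LaurentSeries k) * x).coeff n = x.coeff (n - m) := by
  have h := HahnSeries.coeff_single_mul_add (r := (1 : k)) (x := x) (a := n - m) (b := m)
  rw [sub_add_cancel] at h
  rw [h, one_mul]

lemma valSG_char : ∀ m ∈ valSG, m = 0 ∨ m = 7 ∨ m = 8 ∨ m = 9 ∨ m = 11 ∨ 14 ≤ m := by
  intro m hm
  induction hm using AddSubmonoid.closure_induction with
  | mem x hx =>
    simp only [Set.mem_insert_iff, Set.mem_singleton_iff] at hx
    omega
  | zero => omega
  | add x y _ _ hx hy => omega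

lemma mem_valSG_of_ge : ∀ m : ℕ, 14 ≤ m → m ∈ valSG := by
  intro m
  induction m using Nat.strong_induction_on with
  | _ m ih =>
    intro hm
    by_cases h : m ≤ 20
    · interval_cases m
      · exact (by norm_num : 7 + 7 = 14) ▸ add_mem mem_valSG_7 mem_valSG_7
      · exact (by norm_num : 7 + 8 = 15) ▸ add_mem mem_valSG_7 mem_valSG_8
      · exact (by norm_num : 7 + 9 = 16) ▸ add_mem mem_valSG_7 mem_valSG_9
      · exact (by norm_num : 8 + 9 = 17) ▸ add_mem mem_valSG_8 mem_valSG_9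
      · exact (by norm_num : 7 + 11 = 18) ▸ add_mem mem_valSG_7 mem_valSG_11
      · exact (by norm_num : 8 + 11 = 19) ▸ add_mem mem_valSG_8 mem_valSG_11
      · exact (by norm_num : 9 + 11 = 20) ▸ add_mem mem_valSG_9 mem_valSG_11
    · have h7 : m - 7 ∈ valSG := ih (m - 7) (by omega) (by omega)
      have := add_mem h7 mem_valSG_7
      rwa [(by omega : m - 7 + 7 = m)] at this

lemma coeff_eq_zero_of_gap {x : LaurentSeries k} (hx : x ∈ NSR k) {n : ℤ}
    (hn : n = 1 ∨ n = 10 ∨ n = 12 ∨ n < 0) : x.coeff n = 0 := by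
  by_contra h
  obtain ⟨m, hm, he⟩ := hx n h
  have := valSG_char m hm
  omega

end Aux

section Restrict

variable {k : Type*} [Field k]

open Classical in
/-- Restriction of a Laurent series to a set of exponents. -/
noncomputable def restrict (x : LaurentSeries k) (S : Set ℤ) : LaurentSeries k where
  coeff n := if n ∈ S then x.coeff n else 0
  isPWO_support' := x.isPWO_support.mono (by
    intro n hn
    simp only [Function.mem_support] at hn ⊢
    intro h0
    apply hn
    rw [h0]
    simp)

open Classical in
lemma restrict_coeff (x : LaurentSeries k) (S : Set ℤ) (n : ℤ) :
    (restrict x S).coeff n = if n ∈ S then x.coeff n else 0 := rfl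

def setA : Set ℤ := {n : ℤ | n = 7 ∨ (14 ≤ n ∧ n ≠ 17 ∧ n ≠ 19 ∧ n ≠ 20)}
def setB : Set ℤ := {n : ℤ | n = 8 ∨ n = 17 ∨ n = 19}
def setC : Set ℤ := {n : ℤ | n = 9 ∨ n = 20}

lemma mem_J (x : ↥(NSR k)) (h0 : (x : LaurentSeries k).coeff 0 = 0)
    (h11 : (x : LaurentSeries k).coeff 11 = 0) :
    x ∈ Ideal.span {t7 k, t8 k, t9 k} := by
  set xv : LaurentSeries k := (x : LaurentSeries k) with hxv
  -- the three shifted restrictions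
  have haa : (HahnSeries.single (-7 : ℤ) (1 : k) : LaurentSeries k) * restrict xv setA ∈ NSR k := by
    intro n hn
    rw [coeff_shift, restrict_coeff] at hn
    by_cases hA : n - (-7) ∈ setA
    · rw [if_pos hA] at hn
      obtain ⟨m, hm, he⟩ := x.2 _ hn
      simp only [setA, Set.mem_setOf_eq] at hA
      have hch := valSG_char m hm
      rcases hA with h7 | hge
      · exact ⟨0, zero_mem _, by omega⟩
      · refine ⟨m - 7, ?_, by omega⟩
        have : m - 7 = 7 ∨ m - 7 = 8 ∨ m - 7 = 9 ∨ m - 7 = 11 ∨ 14 ≤ m - 7 := by omega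
        rcases this with h | h | h | h | h
        · rw [h]; exact mem_valSG_7
        · rw [h]; exact mem_valSG_8
        · rw [h]; exact mem_valSG_9
        · rw [h]; exact mem_valSG_11
        · exact mem_valSG_of_ge _ h
    · rw [if_neg hA] at hn; exact absurd rfl hn
  have hbb : (HahnSeries.single (-8 : ℤ) (1 : k) : LaurentSeries k) * restrict xv setB ∈ NSR k := by
    intro n hn
    rw [coeff_shift, restrict_coeff] at hn
    by_cases hB : n - (-8) ∈ setB
    · simp only [setB, Set.mem_setOf_eq] at hB
      rcases hB with h | h | h
      · exact ⟨0, zero_mem _, by omega⟩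
      · exact ⟨9, mem_valSG_9, by omega⟩
      · exact ⟨11, mem_valSG_11, by omega⟩
    · rw [if_neg hB] at hn; exact absurd rfl hn
  have hcc : (HahnSeries.single (-9 : ℤ) (1 : k) : LaurentSeries k) * restrict xv setC ∈ NSR k := by
    intro n hn
    rw [coeff_shift, restrict_coeff] at hn
    by_cases hC : n - (-9) ∈ setC
    · simp only [setC, Set.mem_setOf_eq] at hC
      rcases hC with h | h
      · exact ⟨0, zero_mem _, by omega⟩
      · exact ⟨11, mem_valSG_11, by omega⟩
    · rw [if_neg hC] at hn; exact absurd rfl hn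
  -- support of x
  have hsupp : ∀ n : ℤ, xv.coeff n ≠ 0 → (n = 7 ∨ n = 8 ∨ n = 9 ∨ 14 ≤ n) := by
    intro n hn
    obtain ⟨m, hm, he⟩ := x.2 n hn
    have := valSG_char m hm
    rcases this with h | h | h | h | h | h
    · exact absurd (by rw [(by omega : n = (0:ℤ))]; exact h0) hn
    · omega
    · omega
    · omega
    · exact absurd (by rw [(by omega : n = (11:ℤ))]; exact h11) hn
    · omega
  -- the decomposition identity
  have hdecomp : restrict xv setA + restrict xv setB + restrict xv setC = xv := by
    ext n
    simp only [HahnSeries.coeff_add, restrict_coeff, setA, setB, setC, Set.mem_setOf_eq]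
    by_cases h1 : n = 7 ∨ (14 ≤ n ∧ n ≠ 17 ∧ n ≠ 19 ∧ n ≠ 20)
    · rw [if_pos h1, if_neg (by omega), if_neg (by omega)]; ring
    · by_cases h2 : n = 8 ∨ n = 17 ∨ n = 19
      · rw [if_neg h1, if_pos h2, if_neg (by omega)]; ring
      · by_cases h3 : n = 9 ∨ n = 20
        · rw [if_neg h1, if_neg h2, if_pos h3]; ring
        · rw [if_neg h1, if_neg h2, if_neg h3]
          by_contra hne
          have hne' : xv.coeff n ≠ 0 := fun hc => hne (by rw [hc]; ring)
          have := hsupp n hne'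
          omega
  have hxeq : x = (⟨_, haa⟩ : ↥(NSR k)) * t7 k + (⟨_, hbb⟩ : ↥(NSR k)) * t8 k
      + (⟨_, hcc⟩ : ↥(NSR k)) * t9 k := by
    apply Subtype.ext
    push_cast
    show xv = _
    rw [t7, t8, t9]
    show xv = _ * tE k ^ 7 + _ * tE k ^ 8 + _ * tE k ^ 9
    rw [tE_pow_single, tE_pow_single, tE_pow_single]
    rw [mul_comm _ (HahnSeries.single ((7:ℕ):ℤ) (1:k)), ← mul_assoc,
        HahnSeries.single_mul_single,
        mul_comm _ (HahnSeries.single ((8:ℕ):ℤ) (1:k)), ← mul_assoc,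
        HahnSeries.single_mul_single,
        mul_comm _ (HahnSeries.single ((9:ℕ):ℤ) (1:k)), ← mul_assoc,
        HahnSeries.single_mul_single]
    norm_num [HahnSeries.single_zero_one]
    exact hdecomp.symm
  rw [hxeq]
  refine add_mem (add_mem ?_ ?_) ?_
  · exact Ideal.mul_mem_left _ _ (Ideal.subset_span (by simp))
  · exact Ideal.mul_mem_left _ _ (Ideal.subset_span (by simp))
  · exact Ideal.mul_mem_left _ _ (Ideal.subset_span (by simp))

end Restrict

section Maps

variable {k : Type*} [Field k]

lemma shift_mem : ∀ x : ↥(NSR k), x ∈ Ideal.span {t8 k, t9 k, t21 k} →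
    (HahnSeries.single (-1 : ℤ) (1 : k) : LaurentSeries k) * (x : LaurentSeries k) ∈ NSR k := by
  intro x hx
  induction hx using Submodule.span_induction with
  | mem y hy =>
    simp only [Set.mem_insert_iff, Set.mem_singleton_iff] at hy
    rcases hy with rfl | rfl | rfl
    · rw [t8]
      show (HahnSeries.single (-1 : ℤ) (1 : k) : LaurentSeries k) * tE k ^ 8 ∈ NSR k
      rw [tE_pow_single, HahnSeries.single_mul_single, one_mul]
      have := single_mem_NSR (k := k) mem_valSG_7
      convert this using 2 <;> norm_num
    · rw [t9]
      show (HahnSeries.single (-1 : ℤ) (1 : k) : LaurentSeries k) * tE k ^ 9 ∈ NSR k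
      rw [tE_pow_single, HahnSeries.single_mul_single, one_mul]
      have := single_mem_NSR (k := k) mem_valSG_8
      convert this using 2 <;> norm_num
    · rw [t21]
      show (HahnSeries.single (-1 : ℤ) (1 : k) : LaurentSeries k) * tE k ^ 21 ∈ NSR k
      rw [tE_pow_single, HahnSeries.single_mul_single, one_mul]
      have h20 : (20 : ℕ) ∈ valSG := by
        have := add_mem mem_valSG_9 mem_valSG_11
        norm_num at this ⊢; exact this
      have := single_mem_NSR (k := k) h20
      convert this using 2 <;> norm_num
  | zero => simp [zero_mem]
  | add y z _ _ hy hz =>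
    push_cast
    rw [mul_add]
    exact add_mem hy hz
  | smul r y _ hy =>
    have : ((r • y : ↥(NSR k)) : LaurentSeries k) = (r : LaurentSeries k) * (y : LaurentSeries k) := rfl
    rw [this, mul_left_comm]
    exact mul_mem r.2 hy

/-- "Division by t" as a linear map from `I` to `R`. -/
noncomputable def divT : ↥(Ideal.span {t8 k, t9 k, t21 k}) →ₗ[↥(NSR k)] ↥(NSR k) where
  toFun x := ⟨(HahnSeries.single (-1 : ℤ) (1 : k) : LaurentSeries k) * ((x : ↥(NSR k)) : LaurentSeries k),
    shift_mem _ x.2⟩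
  map_add' x y := by
    apply Subtype.ext
    show (HahnSeries.single (-1:ℤ) (1:k) : LaurentSeries k) * _ = _
    push_cast
    rw [mul_add]
  map_smul' r x := by
    apply Subtype.ext
    show (HahnSeries.single (-1:ℤ) (1:k) : LaurentSeries k) * _ = _
    push_cast
    show _ * ((r : LaurentSeries k) * _) = (r : LaurentSeries k) * (_ * _)
    rw [mul_left_comm]

end Maps

section Coe

variable {k : Type*} [Field k]

lemma coe_t7 : ((t7 k) : LaurentSeries k) = HahnSeries.single (7 : ℤ) (1 : k) := by
  show tE k ^ 7 = _; rw [tE_pow_single]; norm_num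

lemma coe_t8 : ((t8 k) : LaurentSeries k) = HahnSeries.single (8 : ℤ) (1 : k) := by
  show tE k ^ 8 = _; rw [tE_pow_single]; norm_num

lemma coe_t9 : ((t9 k) : LaurentSeries k) = HahnSeries.single (9 : ℤ) (1 : k) := by
  show tE k ^ 9 = _; rw [tE_pow_single]; norm_num

lemma coe_t21 : ((t21 k) : LaurentSeries k) = HahnSeries.single (21 : ℤ) (1 : k) := by
  show tE k ^ 21 = _; rw [tE_pow_single]; norm_num

end Coe


theorem trace_le (k : Type*) [Field k] :
    traceIdeal ↥(NSR k) ↥(Ideal.span {t8 k, t9 k, t21 k}) ≤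
      Ideal.span {t7 k, t8 k, t9 k} := by
  have hm8 : t8 k ∈ Ideal.span {t8 k, t9 k, t21 k} := Ideal.subset_span (by simp)
  have hm9 : t9 k ∈ Ideal.span {t8 k, t9 k, t21 k} := Ideal.subset_span (by simp)
  have hm21 : t21 k ∈ Ideal.span {t8 k, t9 k, t21 k} := Ideal.subset_span (by simp)
  apply iSup_le
  intro f
  rintro y ⟨x, rfl⟩
  obtain ⟨xv, hxv⟩ := x
  have key : ∀ (u w : ↥(NSR k)) (hu : u ∈ Ideal.span {t8 k, t9 k, t21 k})
      (hw : w ∈ Ideal.span {t8 k, t9 k, t21 k}) (p q : ℤ),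
      ((u : LaurentSeries k) = HahnSeries.single p 1) →
      ((w : LaurentSeries k) = HahnSeries.single q 1) →
      ∀ n : ℤ, ((f ⟨u, hu⟩ : ↥(NSR k)) : LaurentSeries k).coeff (n - q)
        = ((f ⟨w, hw⟩ : ↥(NSR k)) : LaurentSeries k).coeff (n - p) := by
    intro u w hu hw p q hp hq n
    have h1 : w • (⟨u, hu⟩ : ↥(Ideal.span {t8 k, t9 k, t21 k})) = u • ⟨w, hw⟩ := by
      apply Subtype.ext
      show w * u = u * w
      ring
    have h2 := congrArg f h1
    rw [map_smul, map_smul, smul_eq_mul, smul_eq_mul] at h2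
    have h3 := congrArg (fun z : ↥(NSR k) => ((z : LaurentSeries k)).coeff n) h2
    simp only [MulMemClass.coe_mul, hp, hq] at h3
    rwa [coeff_shift, coeff_shift] at h3
  induction hxv using Submodule.span_induction with
  | mem y hy =>
    simp only [Set.mem_insert_iff, Set.mem_singleton_iff] at hy
    rcases hy with rfl | rfl | rfl
    · apply mem_J
      · have := key (t8 k) (t9 k) hm8 hm9 8 9 coe_t8 coe_t9 9
        norm_num at this
        rw [this]
        exact coeff_eq_zero_of_gap (f ⟨t9 k, hm9⟩).2 (by norm_num)
      · have := key (t8 k) (t9 k) hm8 hm9 8 9 coe_t8 coe_t9 20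
        norm_num at this
        rw [this]
        exact coeff_eq_zero_of_gap (f ⟨t9 k, hm9⟩).2 (by norm_num)
    · apply mem_J
      · have := key (t9 k) (t8 k) hm9 hm8 9 8 coe_t9 coe_t8 8
        norm_num at this
        rw [this]
        exact coeff_eq_zero_of_gap (f ⟨t8 k, hm8⟩).2 (by norm_num)
      · have := key (t9 k) (t8 k) hm9 hm8 9 8 coe_t9 coe_t8 19
        norm_num at this
        rw [this]
        exact coeff_eq_zero_of_gap (f ⟨t8 k, hm8⟩).2 (by norm_num)
    · apply mem_J
      · have := key (t21 k) (t8 k) hm21 hm8 21 8 coe_t21 coe_t8 8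
        norm_num at this
        rw [this]
        exact coeff_eq_zero_of_gap (f ⟨t8 k, hm8⟩).2 (by norm_num)
      · have := key (t21 k) (t8 k) hm21 hm8 21 8 coe_t21 coe_t8 19
        norm_num at this
        rw [this]
        exact coeff_eq_zero_of_gap (f ⟨t8 k, hm8⟩).2 (by norm_num)
  | zero =>
    rw [show (⟨0, Submodule.zero_mem _⟩ : ↥(Ideal.span {t8 k, t9 k, t21 k})) = 0 from rfl,
      map_zero]
    exact zero_mem _
  | add a b ha hb iha ihb =>
    rw [show (⟨a + b, Submodule.add_mem _ ha hb⟩ : ↥(Ideal.span {t8 k, t9 k, t21 k}))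
        = ⟨a, ha⟩ + ⟨b, hb⟩ from rfl, map_add]
    exact add_mem iha ihb
  | smul r a ha iha =>
    rw [show (⟨r • a, Submodule.smul_mem _ r ha⟩ : ↥(Ideal.span {t8 k, t9 k, t21 k}))
        = r • ⟨a, ha⟩ from rfl, map_smul]
    exact Submodule.smul_mem _ _ iha

theorem le_trace (k : Type*) [Field k] :
    Ideal.span {t7 k, t8 k, t9 k} ≤
      traceIdeal ↥(NSR k) ↥(Ideal.span {t8 k, t9 k, t21 k}) := by
  have hm8 : t8 k ∈ Ideal.span {t8 k, t9 k, t21 k} := Ideal.subset_span (by simp)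
  have hm9 : t9 k ∈ Ideal.span {t8 k, t9 k, t21 k} := Ideal.subset_span (by simp)
  rw [Ideal.span_le]
  have hsub : ∀ g : ↥(Ideal.span {t8 k, t9 k, t21 k}) →ₗ[↥(NSR k)] ↥(NSR k),
      LinearMap.range g ≤ traceIdeal ↥(NSR k) ↥(Ideal.span {t8 k, t9 k, t21 k}) := by
    intro g
    unfold traceIdeal
    exact le_iSup (fun g => LinearMap.range g) g
  intro g hg
  simp only [Set.mem_insert_iff, Set.mem_singleton_iff] at hg
  rcases hg with rfl | rfl | rfl
  · refine hsub divT ⟨⟨t8 k, hm8⟩, ?_⟩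
    apply Subtype.ext
    show (HahnSeries.single (-1 : ℤ) (1 : k) : LaurentSeries k) * ((t8 k : ↥(NSR k)) : LaurentSeries k)
      = ((t7 k : ↥(NSR k)) : LaurentSeries k)
    rw [coe_t8, coe_t7, HahnSeries.single_mul_single, one_mul]
    norm_num
  · exact hsub (Submodule.subtype _) ⟨⟨t8 k, hm8⟩, rfl⟩
  · exact hsub (Submodule.subtype _) ⟨⟨t9 k, hm9⟩, rfl⟩

/-- In `R = k[[t⁷, t⁸, t⁹, t¹¹]]`, the trace ideal of
`I = (t⁸, t⁹, t²¹)` is `tr_R(I) = (t⁷, t⁸, t⁹)`. -/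
theorem nsr_trace_of_ideal
    (k : Type*) [Field k] [Infinite k] :
    traceIdeal ↥(NSR k) ↥(Ideal.span {t8 k, t9 k, t21 k}) =
      Ideal.span {t7 k, t8 k, t9 k} := by
  exact le_antisymm (trace_le k) (le_trace k)
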